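/- Let X be a finite vertex set of a graph G and let F be a filter on the poset of tame subsets of C_X (ordered by inclusion) such that F contains, for some critical Y ⊆ X, every cofinite subset of C_X(Y), and F is a filter (upward closed, closed under finite intersections, not containing ∅). If moreover every member 𝒞 of F is tame, then F cannot contain a set 𝒞 with C_X(Y) ∖ 𝒞 infinite; i.e. F is exactly the upward closure in the tame-subset poset of the cofinite filter on C_X(Y). -/
import Mathlib


open SimpleGraph Set

variable {V : Type*}

/-- The set of components of `G - X` (the subgraph of `G` induced on `Xᶜ`). -/
abbrev Comps (G : SimpleGraph V) (X : Set V) := (G.induce Xᶜ).ConnectedComponent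

/-- The vertex set (in `V`) of a component of `G - X`. -/
def suppV (G : SimpleGraph V) (X : Set V) (C : Comps G X) : Set V :=
  Subtype.val '' {v | (G.induce Xᶜ).connectedComponentMk v = C}

/-- The neighbourhood `N(C) ⊆ X` of a component `C` of `G - X`. -/
def nbhd (G : SimpleGraph V) (X : Set V) (C : Comps G X) : Set V :=
  {x ∈ X | ∃ v ∈ suppV G X C, G.Adj x v}

/-- `C_X(Y)`: the components of `G - X` with neighbourhood exactly `Y`. -/
def compsWithNbhd (G : SimpleGraph V) (X Y : Set V) : Set (Comps G X) :=
  {C | nbhd G X C = Y}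

/-- A finite vertex set `Y` is critical if `C_Y(Y)` is infinite. -/
def Critical (G : SimpleGraph V) (Y : Set V) : Prop :=
  Y.Finite ∧ (compsWithNbhd G Y Y).Infinite

/-- A set `𝒞 ⊆ C_X` is tame if for no critical `Y ⊆ X` both `𝒞 ∩ C_X(Y)` and
`(C_X ∖ 𝒞) ∩ C_X(Y)` are infinite. -/
def Tame (G : SimpleGraph V) (X : Set V) (𝒞 : Set (Comps G X)) : Prop :=
  ∀ Y ⊆ X, Critical G Y →
    ¬((𝒞 ∩ compsWithNbhd G X Y).Infinite ∧
      ((compsWithNbhd G X Y) \ 𝒞).Infinite)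

/-- A filter `F` on the poset of tame subsets of `C_X` containing all
cofinite subsets of `C_X(Y)` for some critical `Y ⊆ X` contains no set `𝒞` with
`C_X(Y) ∖ 𝒞` infinite; indeed `F` is exactly the upward closure (within tame sets)
of the cofinite filter on `C_X(Y)`. -/
theorem stmt19 (G : SimpleGraph V) (X Y : Set V) (hX : X.Finite) (hYX : Y ⊆ X)
    (hcrit : Critical G Y) (F : Set (Set (Comps G X)))
    (htame : ∀ A ∈ F, Tame G X A)
    (hne : ∅ ∉ F)
    (hup : ∀ A ∈ F, ∀ B, Tame G X B → A ⊆ B → B ∈ F)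
    (hinter : ∀ A ∈ F, ∀ B ∈ F, A ∩ B ∈ F)
    (hcof : ∀ 𝒞 ⊆ compsWithNbhd G X Y,
      (compsWithNbhd G X Y \ 𝒞).Finite → 𝒞 ∈ F) :
    (¬ ∃ 𝒞 ∈ F, (compsWithNbhd G X Y \ 𝒞).Infinite) ∧
    F = {𝒞 | Tame G X 𝒞 ∧ ∃ 𝒟, 𝒟 ⊆ compsWithNbhd G X Y ∧
          (compsWithNbhd G X Y \ 𝒟).Finite ∧ 𝒟 ⊆ 𝒞} := by
  have key : ¬ ∃ 𝒞 ∈ F, (compsWithNbhd G X Y \ 𝒞).Infinite := by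
    rintro ⟨𝒞, h𝒞F, hinf⟩
    have hfin : (𝒞 ∩ compsWithNbhd G X Y).Finite := by
      rw [← Set.not_infinite]; intro hoo
      exact htame 𝒞 h𝒞F Y hYX hcrit ⟨hoo, hinf⟩
    have h𝒟 : (compsWithNbhd G X Y \ 𝒞) ∈ F := by
      apply hcof _ (Set.diff_subset)
      apply Set.Finite.subset hfin
      intro C hC
      simp only [Set.mem_diff, Set.mem_inter_iff] at *
      tauto
    have : 𝒞 ∩ (compsWithNbhd G X Y \ 𝒞) = ∅ := by
      ext C; simp only [Set.mem_inter_iff, Set.mem_diff, Set.mem_empty_iff_false]; tauto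
    exact hne (this ▸ hinter 𝒞 h𝒞F _ h𝒟)
  refine ⟨key, Set.Subset.antisymm ?_ ?_⟩
  · intro 𝒞 h𝒞F
    refine ⟨htame 𝒞 h𝒞F, compsWithNbhd G X Y ∩ 𝒞, Set.inter_subset_left, ?_, Set.inter_subset_right⟩
    have : compsWithNbhd G X Y \ (compsWithNbhd G X Y ∩ 𝒞) = compsWithNbhd G X Y \ 𝒞 := by
      ext C; simp only [Set.mem_diff, Set.mem_inter_iff]; tauto
    rw [this]
    rw [← Set.not_infinite]; intro h
    exact key ⟨𝒞, h𝒞F, h⟩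
  · rintro 𝒞 ⟨htm, 𝒟, h𝒟sub, h𝒟fin, h𝒟𝒞⟩
    exact hup 𝒟 (hcof 𝒟 h𝒟sub h𝒟fin) 𝒞 htm h𝒟𝒞
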